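/- Let f and g be multivariate polynomials with real coefficients (in any finite set of variables). Then the total degree of f² + g² equals the maximum of the total degrees of f² and g², which equals twice the maximum of the total degrees of f and g: deg(f² + g²) = 2·max(deg f, deg g). In particular, unlike over ℂ, the top-degree terms of f² and g² cannot cancel in f² + g². -/

import Mathlib

open MvPolynomial

/-- Sum of two squares of real mv-polynomials is nonzero if one is nonzero. -/
lemma aux_sos_ne_zero {σ : Type*} (f g : MvPolynomial σ ℝ) (hf : f ≠ 0) :
    f ^ 2 + g ^ 2 ≠ 0 := by
  intro h
  apply hf
  apply MvPolynomial.funext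
  intro x
  have := congrArg (MvPolynomial.eval x) h
  simp only [map_add, map_pow, map_zero] at this
  have h1 : MvPolynomial.eval x f = 0 := by nlinarith [sq_nonneg (MvPolynomial.eval x f), sq_nonneg (MvPolynomial.eval x g)]
  simpa using h1

lemma aux_degree_eq_sum (d : σ →₀ ℕ) : Finsupp.degree d = d.sum fun _ e => e := rfl

/-- The top homogeneous component is nonzero. -/
lemma aux_L_ne_zero {σ : Type*} {R : Type*} [CommRing R] (p : MvPolynomial σ R) (hp : p ≠ 0) :
    MvPolynomial.homogeneousComponent p.totalDegree p ≠ 0 := by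
  classical
  obtain ⟨m, hm, hmax⟩ := p.support.exists_mem_eq_sup
    (MvPolynomial.support_nonempty.mpr hp) (fun s => s.sum fun _ e => e)
  intro h
  have hcoeff : MvPolynomial.coeff m (MvPolynomial.homogeneousComponent p.totalDegree p)
      = MvPolynomial.coeff m p := by
    rw [MvPolynomial.coeff_homogeneousComponent, if_pos]
    rw [aux_degree_eq_sum]
    exact (by rw [MvPolynomial.totalDegree, hmax])
  rw [h] at hcoeff
  exact (MvPolynomial.mem_support_iff.mp hm) hcoeff.symm

/-- The remainder after removing the top homogeneous component has smaller degree (or is zero). -/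
lemma aux_rest {σ : Type*} {R : Type*} [CommRing R] (p : MvPolynomial σ R) :
    (p - MvPolynomial.homogeneousComponent p.totalDegree p).totalDegree < p.totalDegree
      ∨ p - MvPolynomial.homogeneousComponent p.totalDegree p = 0 := by
  classical
  set r := p - MvPolynomial.homogeneousComponent p.totalDegree p with hr
  by_cases h0 : r = 0
  · exact Or.inr h0
  left
  have key : ∀ m ∈ r.support, (m.sum fun _ e => e) < p.totalDegree := by
    intro m hm
    have hc : MvPolynomial.coeff m r ≠ 0 := MvPolynomial.mem_support_iff.mp hm
    have hcr : MvPolynomial.coeff m r =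
        (if Finsupp.degree m = p.totalDegree then 0 else MvPolynomial.coeff m p) := by
      rw [hr, MvPolynomial.coeff_sub, MvPolynomial.coeff_homogeneousComponent]
      split <;> ring
    rw [hcr] at hc
    split at hc
    · exact absurd rfl hc
    · rename_i hne
      have hmp : m ∈ p.support := MvPolynomial.mem_support_iff.mpr hc
      have hle := MvPolynomial.le_totalDegree hmp
      rw [aux_degree_eq_sum] at hne
      omega
  exact (Finset.sup_lt_iff (by
    rcases Finset.Nonempty.exists_mem (MvPolynomial.support_nonempty.mpr h0) with ⟨m, hm⟩
    exact lt_of_le_of_lt (Nat.zero_le _) (key m hm))).mpr key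

/-- Homogeneous + lower degree stuff has degree exactly d. -/
lemma aux_deg_homog_add {σ : Type*} {R : Type*} [CommRing R] {H r : MvPolynomial σ R} {d : ℕ}
    (hH : H.IsHomogeneous d) (hH0 : H ≠ 0)
    (hr : r.totalDegree < d ∨ r = 0) :
    (H + r).totalDegree = d := by
  rcases hr with hr | hr
  · rw [MvPolynomial.totalDegree_add_eq_left_of_totalDegree_lt
      (lt_of_lt_of_le hr (hH.totalDegree hH0).ge), hH.totalDegree hH0]
  · rw [hr, add_zero, hH.totalDegree hH0]

/-- Decomposition of a square. -/
lemma aux_sq_decomp {σ : Type*} (p : MvPolynomial σ ℝ) :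
    ∃ r : MvPolynomial σ ℝ,
      p ^ 2 = (MvPolynomial.homogeneousComponent p.totalDegree p) ^ 2 + r ∧
      (r.totalDegree < 2 * p.totalDegree ∨ r = 0) := by
  set L := MvPolynomial.homogeneousComponent p.totalDegree p with hL
  set s := p - L with hs
  refine ⟨L * s + s * L + s ^ 2, by rw [hs]; ring, ?_⟩
  have hLle : L.totalDegree ≤ p.totalDegree :=
    (MvPolynomial.homogeneousComponent_isHomogeneous p.totalDegree p).totalDegree_le
  rcases aux_rest p with hlt | hz
  · left
    have hslt : s.totalDegree < p.totalDegree := hlt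
    have h1 : (L * s).totalDegree < 2 * p.totalDegree := by
      have := MvPolynomial.totalDegree_mul L s
      omega
    have h1' : (s * L).totalDegree < 2 * p.totalDegree := by
      have := MvPolynomial.totalDegree_mul s L
      omega
    have h2 : (s ^ 2).totalDegree < 2 * p.totalDegree := by
      have := MvPolynomial.totalDegree_pow s 2
      omega
    calc (L * s + s * L + s ^ 2).totalDegree
        ≤ max (L * s + s * L).totalDegree (s ^ 2).totalDegree :=
          MvPolynomial.totalDegree_add _ _
      _ < 2 * p.totalDegree := by
          have := MvPolynomial.totalDegree_add (L * s) (s * L)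
          omega
  · right
    have hsz : s = 0 := hz
    rw [hsz]; ring

/-- Degree of a square over ℝ. -/
lemma aux_deg_sq {σ : Type*} (p : MvPolynomial σ ℝ) :
    (p ^ 2).totalDegree = 2 * p.totalDegree := by
  by_cases hp : p = 0
  · simp [hp]
  obtain ⟨r, hdec, hr⟩ := aux_sq_decomp p
  rw [hdec, mul_comm 2 p.totalDegree]
  exact aux_deg_homog_add
    ((MvPolynomial.homogeneousComponent_isHomogeneous p.totalDegree p).pow 2)
    (pow_ne_zero _ (aux_L_ne_zero p hp))
    (hr.imp (fun h => by omega) id)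

/-- For multivariate real polynomials, the total degree of `f² + g²` equals the maximum
of the total degrees of `f²` and `g²`, which is twice the maximum of the total degrees
of `f` and `g`: the top-degree terms of `f²` and `g²` cannot cancel. -/
theorem totalDegree_sq_add_sq {σ : Type*} [Fintype σ]
    (f g : MvPolynomial σ ℝ) :
    (f ^ 2 + g ^ 2).totalDegree
        = max (f ^ 2).totalDegree (g ^ 2).totalDegree ∧
      max (f ^ 2).totalDegree (g ^ 2).totalDegree
        = 2 * max f.totalDegree g.totalDegree := by
  have hf2 := aux_deg_sq f
  have hg2 := aux_deg_sq g
  refine ⟨?_, by rw [hf2, hg2]; omega⟩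
  rcases lt_trichotomy (f ^ 2).totalDegree (g ^ 2).totalDegree with h | h | h
  · rw [MvPolynomial.totalDegree_add_eq_right_of_totalDegree_lt h, max_eq_right h.le]
  · -- equal degrees
    by_cases hf0 : f = 0
    · simp [hf0]
    have hdeq : f.totalDegree = g.totalDegree := by omega
    set d := f.totalDegree with hd
    obtain ⟨rf, hrfdec, hrf⟩ := aux_sq_decomp f
    obtain ⟨rg, hrgdec, hrg⟩ := aux_sq_decomp g
    set Lf := MvPolynomial.homogeneousComponent f.totalDegree f with hLf
    set Lg := MvPolynomial.homogeneousComponent g.totalDegree g with hLg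
    have hH : (Lf ^ 2 + Lg ^ 2).IsHomogeneous (d * 2) := by
      apply MvPolynomial.IsHomogeneous.add
      · exact (MvPolynomial.homogeneousComponent_isHomogeneous f.totalDegree f).pow 2
      · have : (Lg ^ 2).IsHomogeneous (g.totalDegree * 2) :=
          (MvPolynomial.homogeneousComponent_isHomogeneous g.totalDegree g).pow 2
        rwa [← hdeq] at this
    have hH0 : Lf ^ 2 + Lg ^ 2 ≠ 0 := aux_sos_ne_zero Lf Lg (aux_L_ne_zero f hf0)
    have hsum : f ^ 2 + g ^ 2 = (Lf ^ 2 + Lg ^ 2) + (rf + rg) := by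
      rw [hrfdec, hrgdec]; ring
    have hrfg : (rf + rg).totalDegree < d * 2 ∨ rf + rg = 0 := by
      rcases hrf with hrf | hrf <;> rcases hrg with hrg | hrg
      · left
        have := MvPolynomial.totalDegree_add rf rg
        omega
      · left; rw [hrg, add_zero]; omega
      · left; rw [hrf, zero_add]; omega
      · right; rw [hrf, hrg, add_zero]
    rw [hsum, aux_deg_homog_add hH hH0 hrfg, h, max_self, hg2]
    omega
  · rw [MvPolynomial.totalDegree_add_eq_left_of_totalDegree_lt h, max_eq_left h.le]
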